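/- Let G be a compact metrizable topological group, ρ a metric on G inducing its topology that is bi-invariant (ρ(zx, zy) = ρ(x,y) = ρ(xz, yz) for all x,y,z ∈ G), and μ the Haar probability measure on G. Let n, c > 0 be real numbers such that μ(B_ρ(x,r)) ≥ c·rⁿ for every x ∈ G and every 0 < r ≤ 1, where B_ρ(x,r) is the open ρ-ball. Let 0 < p ≤ 1, let ν be a Borel probability measure on G, and let q ≥ 0 be such that for every f ∈ L²(μ) with ∫_G f dμ = 0 one has ( ∫_G | ∫_G f(xy) dν(y) |² dμ(x) )^{1/2} ≤ q · ( ∫_G |f|² dμ )^{1/2}. Then there exists a constant C > 0 depending only on c, n, p and the diameter of (G,ρ) such that for every function f : G → ℝ satisfying |f(x) − f(y)| ≤ ρ(x,y)^p for all x,y ∈ G, one has | ∫_G f dν − ∫_G f dμ | ≤ C · q^{2p/(n+2p)}. -/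

import Mathlib

open MeasureTheory

section Aux

variable {X : Type*} [TopologicalSpace X] [CompactSpace X] [MeasurableSpace X]
  [OpensMeasurableSpace X]

lemma aux_memℒp {κ : Measure X} [IsFiniteMeasure κ] {h : X → ℝ} (hh : Continuous h)
    (e : ENNReal) : MemLp h e κ := by
  obtain ⟨C, hC⟩ := isCompact_univ.exists_bound_of_continuousOn hh.continuousOn
  exact MemLp.of_bound hh.aestronglyMeasurable C
    (Filter.Eventually.of_forall fun x => hC x (Set.mem_univ x))

lemma aux_integrable {κ : Measure X} [IsFiniteMeasure κ] {h : X → ℝ} (hh : Continuous h) :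
    Integrable h κ :=
  memLp_one_iff_integrable.mp (aux_memℒp hh 1)

end Aux

lemma holder_continuous {G : Type*} [MetricSpace G] {p : ℝ} (hp : 0 < p) (f : G → ℝ)
    (hf : ∀ x y : G, |f x - f y| ≤ dist x y ^ p) : Continuous f := by
  rw [Metric.continuous_iff]
  intro x ε hε
  refine ⟨ε ^ (1 / p), Real.rpow_pos_of_pos hε _, fun y hy => ?_⟩
  have h1 : dist y x ^ p < (ε ^ (1 / p)) ^ p :=
    Real.rpow_lt_rpow dist_nonneg hy hp
  have h2 : (ε ^ (1 / p)) ^ p = ε := by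
    rw [← Real.rpow_mul hε.le, one_div, inv_mul_cancel₀ hp.ne', Real.rpow_one]
  calc dist (f y) (f x) = |f y - f x| := Real.dist_eq _ _
    _ ≤ dist y x ^ p := hf y x
    _ < ε := h2 ▸ h1

set_option maxHeartbeats 1600000 in
/-- The 'trivial estimate' (trivialqnu) of Section 2.3.1 in dual form: on a compact metrizable
group with bi-invariant metric and Haar probability measure `μ` whose balls satisfy
`μ(B(x,r)) ≥ c rⁿ`, if the Markov operator of `ν` has norm at most `q` on mean-zero `L²`, then
`|∫ f dν − ∫ f dμ| ≤ C q^{2p/(n+2p)}` for every `p`-Hölder function `f` with constant `1`. -/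
theorem trivial_spectral_gap_estimate {G : Type*} [MetricSpace G] [Group G]
    [IsTopologicalGroup G] [CompactSpace G] [MeasurableSpace G] [BorelSpace G]
    (hbi : ∀ x y z : G, dist (z * x) (z * y) = dist x y ∧ dist (x * z) (y * z) = dist x y)
    (μ : Measure G) [μ.IsHaarMeasure] [IsProbabilityMeasure μ]
    (n c p : ℝ) (hn : 0 < n) (hc : 0 < c) (hp : 0 < p) (hp1 : p ≤ 1)
    (hball : ∀ (x : G) (r : ℝ), 0 < r → r ≤ 1 →
      c * r ^ n ≤ (μ (Metric.ball x r)).toReal) :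
    ∃ C > 0, ∀ (ν : Measure G), IsProbabilityMeasure ν → ∀ q : ℝ, 0 ≤ q →
      (∀ f : G → ℝ, MemLp f 2 μ → ∫ x, f x ∂μ = 0 →
        Real.sqrt (∫ x, (∫ y, f (x * y) ∂ν) ^ 2 ∂μ) ≤
          q * Real.sqrt (∫ x, f x ^ 2 ∂μ)) →
      ∀ f : G → ℝ, (∀ x y : G, |f x - f y| ≤ dist x y ^ p) →
        |∫ x, f x ∂ν - ∫ x, f x ∂μ| ≤ C * q ^ (2 * p / (n + 2 * p)) := by
  set D : ℝ := Metric.diam (Set.univ : Set G) with hD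
  have hD0 : 0 ≤ D := Metric.diam_nonneg
  set K : ℝ := D ^ p with hK
  have hK0 : 0 ≤ K := Real.rpow_nonneg hD0 p
  set α : ℝ := 2 * p / (n + 2 * p) with hα
  have hα0 : 0 < α := by
    apply div_pos <;> linarith
  have hCpos : (0:ℝ) < 1 + K * (1 + (Real.sqrt c)⁻¹) := by
    have h1 : (0:ℝ) ≤ (Real.sqrt c)⁻¹ := inv_nonneg.mpr (Real.sqrt_nonneg c)
    nlinarith
  refine ⟨1 + K * (1 + (Real.sqrt c)⁻¹), hCpos, ?_⟩
  intro ν hν q hq0 hqop f hfH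
  have hfc : Continuous f := holder_continuous hp f hfH
  set m : ℝ := ∫ x, f x ∂μ with hm
  set g : G → ℝ := fun z => f z - m with hg
  have hgH : ∀ x y : G, |g x - g y| ≤ dist x y ^ p := by
    intro x y; simpa [hg] using hfH x y
  have hgc : Continuous g := hfc.sub continuous_const
  -- pointwise bound on g
  have hdistK : ∀ x y : G, dist x y ^ p ≤ K := by
    intro x y
    exact Real.rpow_le_rpow dist_nonneg
      (Metric.dist_le_diam_of_mem isCompact_univ.isBounded trivial trivial) hp.le
  have hgb : ∀ z : G, |g z| ≤ K := by
    intro z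
    have h1 : g z = ∫ w, (f z - f w) ∂μ := by
      rw [integral_sub (integrable_const _) (aux_integrable hfc), integral_const]
      simp [hg, hm]
    rw [h1]
    calc |∫ w, (f z - f w) ∂μ| = ‖∫ w, (f z - f w) ∂μ‖ := rfl
      _ ≤ K * (μ Set.univ).toReal := by
          apply norm_integral_le_of_norm_le_const
          refine Filter.Eventually.of_forall fun w => ?_
          calc ‖f z - f w‖ = |f z - f w| := rfl
            _ ≤ dist z w ^ p := hfH z w
            _ ≤ K := hdistK z w
      _ = K := by simp
  -- the averaging operator
  set T : G → ℝ := fun x => ∫ y, g (x * y) ∂ν with hT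
  have hmulint : ∀ x : G, Integrable (fun y => g (x * y)) ν := by
    intro x
    exact aux_integrable (hgc.comp (continuous_mul_left x))
  have hTH : ∀ x x' : G, |T x - T x'| ≤ dist x x' ^ p := by
    intro x x'
    have h1 : T x - T x' = ∫ y, (g (x * y) - g (x' * y)) ∂ν :=
      (integral_sub (hmulint x) (hmulint x')).symm
    rw [h1]
    calc |∫ y, (g (x * y) - g (x' * y)) ∂ν| = ‖∫ y, (g (x * y) - g (x' * y)) ∂ν‖ := rfl
      _ ≤ dist x x' ^ p * (ν Set.univ).toReal := by
          apply norm_integral_le_of_norm_le_const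
          refine Filter.Eventually.of_forall fun y => ?_
          calc ‖g (x * y) - g (x' * y)‖ = |f (x * y) - f (x' * y)| := by simp [hg]
            _ ≤ dist (x * y) (x' * y) ^ p := hfH _ _
            _ = dist x x' ^ p := by rw [(hbi x x' y).2]
      _ = dist x x' ^ p := by simp
  have hTc : Continuous T := holder_continuous hp T hTH
  have hTb : ∀ x : G, |T x| ≤ K := by
    intro x
    calc |T x| = ‖∫ y, g (x * y) ∂ν‖ := rfl
      _ ≤ K * (ν Set.univ).toReal := by
          apply norm_integral_le_of_norm_le_const
          exact Filter.Eventually.of_forall fun y => hgb (x * y)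
      _ = K := by simp
  -- mean zero and L² bound for g
  have hgmem : MemLp g 2 μ := aux_memℒp hgc 2
  have hgmean : ∫ x, g x ∂μ = 0 := by
    rw [hg]
    rw [integral_sub (aux_integrable hfc) (integrable_const _), integral_const]
    simp [hm]
  have hgL2 : Real.sqrt (∫ x, g x ^ 2 ∂μ) ≤ K := by
    have h1 : ∫ x, g x ^ 2 ∂μ ≤ K ^ 2 := by
      calc ∫ x, g x ^ 2 ∂μ ≤ ∫ _x, K ^ 2 ∂μ := by
            apply integral_mono (aux_integrable (by continuity)) (integrable_const _)
            intro x
            calc g x ^ 2 = |g x| ^ 2 := (sq_abs _).symm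
              _ ≤ K ^ 2 := pow_le_pow_left₀ (abs_nonneg _) (hgb x) 2
        _ = K ^ 2 := by simp
    calc Real.sqrt (∫ x, g x ^ 2 ∂μ) ≤ Real.sqrt (K ^ 2) := Real.sqrt_le_sqrt h1
      _ = K := Real.sqrt_sq hK0
  have hTop : Real.sqrt (∫ x, T x ^ 2 ∂μ) ≤ q * K := by
    calc Real.sqrt (∫ x, T x ^ 2 ∂μ) ≤ q * Real.sqrt (∫ x, g x ^ 2 ∂μ) :=
          hqop g hgmem hgmean
      _ ≤ q * K := mul_le_mul_of_nonneg_left hgL2 hq0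
  -- the key estimate for each radius r
  have key : ∀ r : ℝ, 0 < r → r ≤ 1 →
      |∫ x, g x ∂ν| ≤ r ^ p + q * K / Real.sqrt (c * r ^ n) := by
    intro r hr hr1
    set B : Set G := Metric.ball (1 : G) r with hB
    set a : ℝ := (μ B).toReal with ha
    have hacr : c * r ^ n ≤ a := hball 1 r hr hr1
    have ha0 : 0 < a := lt_of_lt_of_le (by positivity) hacr
    have hBfin : μ B < ⊤ := measure_lt_top μ B
    -- Fubini input
    have hprodint : Integrable (Function.uncurry fun x y => g (x * y))
        ((μ.restrict B).prod ν) := by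
      have : Continuous (fun z : G × G => g (z.1 * z.2)) := hgc.comp continuous_mul
      exact aux_integrable this
    have hswap : ∫ x in B, T x ∂μ = ∫ y, (∫ x in B, g (x * y) ∂μ) ∂ν :=
      integral_integral_swap hprodint
    have hinner : ∀ y : G, |a * g y - ∫ x in B, g (x * y) ∂μ| ≤ a * r ^ p := by
      intro y
      have h1 : a * g y = ∫ _x in B, g y ∂μ := by
        rw [setIntegral_const]; simp [ha, smul_eq_mul, Measure.real]
      have hint : Integrable (fun x => g (x * y)) (μ.restrict B) :=
        (aux_integrable (hgc.comp (continuous_mul_right y))).restrict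
      have h2 : a * g y - ∫ x in B, g (x * y) ∂μ = ∫ x in B, (g y - g (x * y)) ∂μ := by
        rw [h1, ← integral_sub (integrable_const _) hint]
      rw [h2]
      calc |∫ x in B, (g y - g (x * y)) ∂μ| = ‖∫ x in B, (g y - g (x * y)) ∂μ‖ := rfl
        _ ≤ r ^ p * (μ B).toReal := by
            refine norm_setIntegral_le_of_norm_le_const hBfin (fun x hx => ?_)
            have hd : dist y (x * y) = dist (1 : G) x := by
              calc dist y (x * y) = dist (1 * y) (x * y) := by rw [one_mul]
                _ = dist (1 : G) x := (hbi 1 x y).2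
            calc ‖g y - g (x * y)‖ = |f y - f (x * y)| := by simp [hg]
              _ ≤ dist y (x * y) ^ p := hfH _ _
              _ ≤ r ^ p := by
                  apply Real.rpow_le_rpow dist_nonneg _ hp.le
                  rw [hd, dist_comm]
                  exact le_of_lt (Metric.mem_ball.mp hx)
        _ = a * r ^ p := by rw [ha, mul_comm]
    have hstep1 : |a * (∫ x, g x ∂ν) - ∫ x in B, T x ∂μ| ≤ a * r ^ p := by
      have h1 : a * ∫ x, g x ∂ν = ∫ y, a * g y ∂ν := (integral_const_mul a _).symm
      have hint1 : Integrable (fun y => a * g y) ν := (aux_integrable hgc).const_mul a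
      have hint2 : Integrable (fun y => ∫ x in B, g (x * y) ∂μ) ν :=
        hprodint.integral_prod_right
      rw [h1, hswap, ← integral_sub hint1 hint2]
      calc ‖∫ y, (a * g y - ∫ x in B, g (x * y) ∂μ) ∂ν‖ ≤ a * r ^ p * (ν Set.univ).toReal := by
            apply norm_integral_le_of_norm_le_const
            exact Filter.Eventually.of_forall hinner
        _ = a * r ^ p := by simp
    -- Cauchy-Schwarz
    have hstep2 : |∫ x in B, T x ∂μ| ≤ Real.sqrt a * (q * K) := by
      have hconj : Real.HolderConjugate 2 2 := by
        constructor <;> norm_num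
      have hcs := integral_mul_norm_le_Lp_mul_Lq (μ := μ.restrict B) (f := T)
        (g := fun _ => (1 : ℝ)) hconj
        ((aux_memℒp hTc _).restrict B) ((aux_memℒp continuous_const _).restrict B)
      have h11 : (∫ x in B, ‖(1 : ℝ)‖ ^ (2 : ℝ) ∂μ) = a := by
        simp [ha, Measure.real]
      have hTT : (∫ x in B, ‖T x‖ ^ (2 : ℝ) ∂μ) ≤ ∫ x, T x ^ 2 ∂μ := by
        have heq : ∀ x : G, ‖T x‖ ^ (2 : ℝ) = T x ^ 2 := by
          intro x
          rw [show ((2 : ℝ)) = ((2 : ℕ) : ℝ) by norm_num, Real.rpow_natCast]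
          exact (sq_abs _)
        calc (∫ x in B, ‖T x‖ ^ (2 : ℝ) ∂μ) = ∫ x in B, T x ^ 2 ∂μ := by
              exact integral_congr_ae (Filter.Eventually.of_forall heq)
          _ ≤ ∫ x, T x ^ 2 ∂μ := by
              apply setIntegral_le_integral (aux_integrable (by continuity))
              exact Filter.Eventually.of_forall fun x => sq_nonneg _
      have hband : |∫ x in B, T x ∂μ| ≤ ∫ x in B, ‖T x‖ * ‖(1 : ℝ)‖ ∂μ := by
        have hb := norm_integral_le_integral_norm (μ := μ.restrict B) T
        simpa only [norm_one, mul_one, Real.norm_eq_abs] using hb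
      have hTnonneg : (0:ℝ) ≤ ∫ x, T x ^ 2 ∂μ :=
        integral_nonneg fun x => sq_nonneg _
      calc |∫ x in B, T x ∂μ| ≤ ∫ x in B, ‖T x‖ * ‖(1 : ℝ)‖ ∂μ := hband
        _ ≤ (∫ x in B, ‖T x‖ ^ (2:ℝ) ∂μ) ^ (1 / (2:ℝ)) *
            (∫ x in B, ‖(1:ℝ)‖ ^ (2:ℝ) ∂μ) ^ (1 / (2:ℝ)) := hcs
        _ ≤ (∫ x, T x ^ 2 ∂μ) ^ (1 / (2:ℝ)) * a ^ (1 / (2:ℝ)) := by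
            rw [h11]
            apply mul_le_mul_of_nonneg_right _ (Real.rpow_nonneg ha0.le _)
            apply Real.rpow_le_rpow _ hTT (by norm_num)
            apply integral_nonneg
            intro x
            positivity
        _ = Real.sqrt (∫ x, T x ^ 2 ∂μ) * Real.sqrt a := by
            rw [Real.sqrt_eq_rpow, Real.sqrt_eq_rpow]
        _ ≤ (q * K) * Real.sqrt a :=
            mul_le_mul_of_nonneg_right hTop (Real.sqrt_nonneg a)
        _ = Real.sqrt a * (q * K) := mul_comm _ _
    -- combine
    have hsqa : Real.sqrt a * Real.sqrt a = a := Real.mul_self_sqrt ha0.le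
    have hsqa0 : 0 < Real.sqrt a := Real.sqrt_pos.mpr ha0
    have hcombine : |∫ x, g x ∂ν| ≤ r ^ p + q * K / Real.sqrt a := by
      have h1 : a * |∫ x, g x ∂ν| = |a * ∫ x, g x ∂ν| := by
        rw [abs_mul, abs_of_pos ha0]
      have h2 : |a * ∫ x, g x ∂ν| ≤ a * r ^ p + Real.sqrt a * (q * K) := by
        have h4 := abs_add_le (a * (∫ x, g x ∂ν) - ∫ x in B, T x ∂μ) (∫ x in B, T x ∂μ)
        rw [sub_add_cancel] at h4
        exact h4.trans (add_le_add hstep1 hstep2)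
      have hdiv : a * (q * K / Real.sqrt a) = Real.sqrt a * (q * K) := by
        rw [mul_comm, div_mul_eq_mul_div, mul_div_assoc, Real.div_sqrt, mul_comm]
      have h3 : a * |∫ x, g x ∂ν| ≤ a * (r ^ p + q * K / Real.sqrt a) := by
        rw [mul_add, hdiv, h1]
        exact h2
      exact le_of_mul_le_mul_left h3 ha0
    refine hcombine.trans (add_le_add_right ?_ _)
    exact div_le_div_of_nonneg_left (by positivity)
      (Real.sqrt_pos.mpr (by positivity)) (Real.sqrt_le_sqrt hacr)
  -- rewrite goal in terms of g
  have hgoal : ∫ x, f x ∂ν - ∫ x, f x ∂μ = ∫ x, g x ∂ν := by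
    rw [hg]
    rw [integral_sub (aux_integrable hfc) (integrable_const _), integral_const]
    simp [hm]
  rw [hgoal]
  set C : ℝ := 1 + K * (1 + (Real.sqrt c)⁻¹) with hC
  have hsc : 0 < Real.sqrt c := Real.sqrt_pos.mpr hc
  have hC1 : (1 : ℝ) + K * (Real.sqrt c)⁻¹ ≤ C := by
    rw [hC]; nlinarith [inv_nonneg.mpr hsc.le]
  have hCK : K ≤ C := by
    rw [hC]; nlinarith [inv_nonneg.mpr hsc.le]
  rcases eq_or_lt_of_le hq0 with hq | hqpos
  · -- q = 0
    rw [← hq, Real.zero_rpow hα0.ne', mul_zero]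
    have h0 : |∫ x, g x ∂ν| ≤ 0 := by
      apply le_of_forall_pos_le_add
      intro ε hε
      rw [zero_add]
      set r : ℝ := min 1 (ε ^ (1 / p)) with hr
      have hr0 : 0 < r := lt_min one_pos (Real.rpow_pos_of_pos hε _)
      have hr1 : r ≤ 1 := min_le_left _ _
      have h1 := key r hr0 hr1
      rw [← hq] at h1
      simp only [zero_mul, zero_div] at h1
      refine (h1.trans ?_)
      rw [add_zero]
      calc r ^ p ≤ (ε ^ (1 / p)) ^ p :=
            Real.rpow_le_rpow hr0.le (min_le_right _ _) hp.le
        _ = ε := by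
            rw [← Real.rpow_mul hε.le, one_div, inv_mul_cancel₀ hp.ne', Real.rpow_one]
    exact h0
  · rcases le_or_gt 1 q with hq1 | hq1
    · -- q ≥ 1 : trivial bound
      have h1 : |∫ x, g x ∂ν| ≤ K := by
        calc |∫ x, g x ∂ν| = ‖∫ x, g x ∂ν‖ := rfl
          _ ≤ K * (ν Set.univ).toReal := by
              apply norm_integral_le_of_norm_le_const
              exact Filter.Eventually.of_forall hgb
          _ = K := by simp
      have h2 : (1 : ℝ) ≤ q ^ α := Real.one_le_rpow hq1 hα0.le
      calc |∫ x, g x ∂ν| ≤ K := h1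
        _ = K * 1 := (mul_one K).symm
        _ ≤ C * q ^ α := mul_le_mul hCK h2 one_pos.le (le_trans hK0 hCK)
    · -- 0 < q < 1
      set e : ℝ := 2 / (n + 2 * p) with he
      have he0 : 0 < e := by apply div_pos <;> linarith
      set r : ℝ := q ^ e with hrdef
      have hr0 : 0 < r := Real.rpow_pos_of_pos hqpos _
      have hr1 : r ≤ 1 := Real.rpow_le_one hq0 hq1.le he0.le
      have h1 := key r hr0 hr1
      have hrp : r ^ p = q ^ α := by
        rw [hrdef, ← Real.rpow_mul hq0]
        congr 1
        rw [he, hα]; field_simp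
      have hrn : Real.sqrt (c * r ^ n) = Real.sqrt c * q ^ (e * n / 2) := by
        rw [Real.sqrt_mul hc.le, hrdef, ← Real.rpow_mul hq0]
        congr 1
        rw [Real.sqrt_eq_rpow, ← Real.rpow_mul hq0]
        congr 1
        ring
      have hqen : (0:ℝ) < q ^ (e * n / 2) := Real.rpow_pos_of_pos hqpos _
      have hsum : α + e * n / 2 = 1 := by
        rw [hα, he]; field_simp; ring
      have hsplit : q ^ α * q ^ (e * n / 2) = q := by
        rw [← Real.rpow_add hqpos, hsum, Real.rpow_one]
      have hterm : q * K / Real.sqrt (c * r ^ n) = K * (Real.sqrt c)⁻¹ * q ^ α := by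
        rw [hrn, div_eq_iff (mul_pos hsc hqen).ne']
        calc q * K = K * (q ^ α * q ^ (e * n / 2)) * ((Real.sqrt c)⁻¹ * Real.sqrt c) := by
              rw [hsplit, inv_mul_cancel₀ hsc.ne']; ring
          _ = K * (Real.sqrt c)⁻¹ * q ^ α * (Real.sqrt c * q ^ (e * n / 2)) := by ring
      rw [hrp, hterm] at h1
      calc |∫ x, g x ∂ν| ≤ q ^ α + K * (Real.sqrt c)⁻¹ * q ^ α := h1
        _ = (1 + K * (Real.sqrt c)⁻¹) * q ^ α := by ring
        _ ≤ C * q ^ α :=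
            mul_le_mul_of_nonneg_right hC1 (Real.rpow_nonneg hq0 _)
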